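/- Let D be odd and B ∈ S_D with E = 𝔼_B the corresponding subspace of V_D. If η_D := e_1 + e_3 + ... + e_D belongs to E, then |B| = (D+1)/2. -/

import Mathlib

open Finset

abbrev Vec := ℕ →₀ ZMod 2

/-- The basis vector `e_i`. -/
noncomputable def e (i : ℕ) : Vec := Finsupp.single i 1

/-- For an interval `p = (a,b)` (representing `[a,b]`), the vector `e_I = ∑_{i∈[a,b]} e_i`. -/
noncomputable def eI (p : ℕ × ℕ) : Vec := ∑ j ∈ Finset.Icc p.1 p.2, e j

/-- The map `ξ_i` on intervals. -/
def tint (i : ℕ) (p : ℕ × ℕ) : ℕ × ℕ :=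
  if i ≤ p.1 then (p.1 + 2, p.2 + 2)
  else if p.2 + 2 ≤ i then p
  else (p.1, p.2 + 2)

/-- The map `t_i` on sets of intervals: `t_i(B') = ξ_i(B') ∪ {[i,i]}`. -/
def tmap (i : ℕ) (B : Finset (ℕ × ℕ)) : Finset (ℕ × ℕ) :=
  B.image (tint i) ∪ {(i, i)}

/-- The inductively defined family `S_D`. -/
inductive IsS : ℕ → Finset (ℕ × ℕ) → Prop
  | empty (D : ℕ) : IsS D ∅
  | one : IsS 1 {(1, 1)}
  | step (D i : ℕ) (B' : Finset (ℕ × ℕ)) (h1 : 1 ≤ i) (h2 : i ≤ D + 2)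
      (h : IsS D B') : IsS (D + 2) (tmap i B')

def primEven (D k : ℕ) : Finset (ℕ × ℕ) := (Finset.Icc 1 k).image fun j => (j, D + 1 - j)
def primOddA (D k : ℕ) : Finset (ℕ × ℕ) := (Finset.Icc 1 k).image fun j => (j, D - j)
def primOddB (D k : ℕ) : Finset (ℕ × ℕ) := (Finset.Icc 1 k).image fun j => (j + 1, D + 1 - j)

/-- The primitive elements of `𝕊_D`. -/
def IsPrim (D : ℕ) (B : Finset (ℕ × ℕ)) : Prop :=
  B = ∅ ∨
  (Even D ∧ ∃ k, 1 ≤ k ∧ k ≤ D / 2 ∧ B = primEven D k) ∨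
  (Odd D ∧ ∃ k, Odd k ∧ 1 ≤ k ∧ k ≤ (D - 1) / 2 ∧ (B = primOddA D k ∨ B = primOddB D k))

/-- The inductively defined family `𝕊_D`. -/
inductive IsSS : ℕ → Finset (ℕ × ℕ) → Prop
  | prim (D : ℕ) (B : Finset (ℕ × ℕ)) : IsPrim D B → IsSS D B
  | one : IsSS 1 {(1, 1)}
  | step (D i : ℕ) (B' : Finset (ℕ × ℕ)) (h1 : 1 ≤ i) (h2 : i ≤ D + 2)
      (h : IsSS D B') : IsSS (D + 2) (tmap i B')

/-- The subspace `𝔼_B` spanned by the `e_I`, `I ∈ B`. -/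
noncomputable def EB (B : Finset (ℕ × ℕ)) : Submodule (ZMod 2) Vec :=
  Submodule.span (ZMod 2) (eI '' (B : Set (ℕ × ℕ)))

/-- Two intervals are non-touching. -/
def Nontouch (p q : ℕ × ℕ) : Prop := p.2 + 2 ≤ q.1 ∨ q.2 + 2 ≤ p.1

/-- `p ≺ q`: `p = [a,b]` is strictly nested inside `q = [a',b']`, i.e. `a' < a ≤ b < b'`. -/
def Nested (p q : ℕ × ℕ) : Prop := q.1 < p.1 ∧ p.1 ≤ p.2 ∧ p.2 < q.2

/-- `η_D = e_1 + e_3 + ⋯ + e_D` (`D` odd). -/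
noncomputable def eta (D : ℕ) : Vec := ∑ j ∈ (Finset.Icc 1 D).filter (fun j => j % 2 = 1), e j

noncomputable def Tfun (i k : ℕ) : Vec :=
  if k + 1 < i then e k
  else if k + 1 = i then e k + e (k + 1) + e (k + 2)
  else e (k + 2)

/-- The linear map `T_i : V_{D-2} → V_D`. -/
noncomputable def Tlin (i : ℕ) : Vec →ₗ[ZMod 2] Vec :=
  Finsupp.linearCombination (ZMod 2) (Tfun i)

/-- The inductively defined family `𝒻(V_D)` of subspaces. -/
inductive IsF : ℕ → Submodule (ZMod 2) Vec → Prop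
  | zero (D : ℕ) : IsF D ⊥
  | one : IsF 1 (Submodule.span (ZMod 2) {e 1})
  | step (D i : ℕ) (E' : Submodule (ZMod 2) Vec) (h1 : 1 ≤ i) (h2 : i ≤ D + 2)
      (h : IsF D E') :
      IsF (D + 2) (Submodule.map (Tlin i) E' ⊔ Submodule.span (ZMod 2) {e i})

/-- The subspace `V_D = ⟨e_1,…,e_D⟩`. -/
noncomputable def VD (D : ℕ) : Submodule (ZMod 2) Vec :=
  Submodule.span (ZMod 2) (e '' Set.Icc 1 D)

/-- The symplectic form with `(e_i,e_j) = 1` iff `|i-j| = 1`. -/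
noncomputable def symp (x y : Vec) : ZMod 2 :=
  x.sum fun i xi => xi * (y (i + 1) + if 1 ≤ i then y (i - 1) else 0)

section Aux

lemma e_apply (j m : ℕ) : e j m = if j = m then 1 else 0 := by
  simp [e, Finsupp.single_apply]

lemma sum_e_apply (s : Finset ℕ) (m : ℕ) :
    (∑ j ∈ s, e j) m = if m ∈ s then (1 : ZMod 2) else 0 := by
  rw [Finset.sum_apply']
  simp only [e_apply]
  rw [Finset.sum_ite_eq' s m (fun _ => (1 : ZMod 2))]

lemma eI_apply (p : ℕ × ℕ) (m : ℕ) :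
    eI p m = if p.1 ≤ m ∧ m ≤ p.2 then (1 : ZMod 2) else 0 := by
  rw [eI, sum_e_apply]
  simp [Finset.mem_Icc]

lemma eta_apply (D m : ℕ) :
    eta D m = if 1 ≤ m ∧ m ≤ D ∧ m % 2 = 1 then (1 : ZMod 2) else 0 := by
  rw [eta, sum_e_apply]
  simp [Finset.mem_Icc, and_assoc]

lemma Tlin_e (i j : ℕ) : Tlin i (e j) = Tfun i j := by
  simp [Tlin, e, Finsupp.linearCombination_single]

lemma Tfun_apply (i j m : ℕ) (hi : 1 ≤ i) :
    Tfun i j m = (if j = m then (if m + 1 < i then (1 : ZMod 2) else 0) else 0)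
      + (if j = i - 1 then (if m = i - 1 ∨ m = i ∨ m = i + 1 then (1 : ZMod 2) else 0) else 0)
      + (if j = m - 2 then (if i + 2 ≤ m then (1 : ZMod 2) else 0) else 0) := by
  rw [Tfun]
  split_ifs with h1 h2 <;>
    simp only [Finsupp.add_apply, e_apply] <;>
    split_ifs <;> first | decide | omega | (exfalso; omega)

lemma sum_Tfun_apply (i : ℕ) (hi : 1 ≤ i) (s : Finset ℕ) (m : ℕ) :
    (∑ j ∈ s, Tfun i j) m =
      (if m ∈ s then (if m + 1 < i then (1 : ZMod 2) else 0) else 0)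
      + (if i - 1 ∈ s then (if m = i - 1 ∨ m = i ∨ m = i + 1 then (1 : ZMod 2) else 0) else 0)
      + (if m - 2 ∈ s then (if i + 2 ≤ m then (1 : ZMod 2) else 0) else 0) := by
  rw [Finset.sum_apply', Finset.sum_congr rfl (fun j _ => Tfun_apply i j m hi),
    Finset.sum_add_distrib, Finset.sum_add_distrib,
    Finset.sum_ite_eq' s m, Finset.sum_ite_eq' s (i - 1), Finset.sum_ite_eq' s (m - 2)]

lemma T_eta (D i : ℕ) (hD : D % 2 = 1) (h1 : 1 ≤ i) (h2 : i ≤ D + 2) :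
    eta (D + 2) = Tlin i (eta D) + e i := by
  have hs : Tlin i (eta D) = ∑ j ∈ (Finset.Icc 1 D).filter (fun j => j % 2 = 1), Tfun i j := by
    rw [eta, map_sum]
    exact Finset.sum_congr rfl fun j _ => Tlin_e i j
  ext m
  rw [Finsupp.add_apply, hs, sum_Tfun_apply i h1, eta_apply, e_apply]
  simp only [Finset.mem_filter, Finset.mem_Icc]
  split_ifs <;> first | decide | omega | (exfalso; omega)

lemma T_eI (i : ℕ) (hi : 1 ≤ i) (p : ℕ × ℕ) (hp1 : 1 ≤ p.1) (hp2 : p.1 ≤ p.2) :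
    Tlin i (eI p) = eI (tint i p) := by
  obtain ⟨a, b⟩ := p
  simp only at hp1 hp2
  have hs : Tlin i (eI (a, b)) = ∑ j ∈ Finset.Icc a b, Tfun i j := by
    rw [eI, map_sum]
    exact Finset.sum_congr rfl fun j _ => Tlin_e i j
  simp only [tint]
  split_ifs with hc1 hc2 <;>
  · ext m
    rw [hs, sum_Tfun_apply i hi, eI_apply]
    simp only [Finset.mem_Icc]
    split_ifs <;> first | decide | omega | (exfalso; omega)

noncomputable def Sfun (i m : ℕ) : Vec :=
  if m + 2 ≤ i then e m else if m + 1 = i then e m else if m ≤ i + 1 then 0 else e (m - 2)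

noncomputable def Slin (i : ℕ) : Vec →ₗ[ZMod 2] Vec :=
  Finsupp.linearCombination (ZMod 2) (Sfun i)

lemma Slin_e (i j : ℕ) : Slin i (e j) = Sfun i j := by
  simp [Slin, e, Finsupp.linearCombination_single]

lemma Slin_Tfun (i k : ℕ) (hi : 1 ≤ i) : Slin i (Tfun i k) = e k := by
  rw [Tfun]
  split_ifs with h1 h2
  · rw [Slin_e, Sfun, if_pos (by omega)]
  · rw [map_add, map_add, Slin_e, Slin_e, Slin_e]
    rw [Sfun, if_neg (by omega), if_pos (by omega)]
    rw [Sfun, if_neg (by omega), if_neg (by omega), if_pos (by omega)]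
    rw [Sfun, if_neg (by omega), if_neg (by omega), if_pos (by omega)]
    rw [add_zero, add_zero]
  · rw [Slin_e, Sfun, if_neg (by omega), if_neg (by omega), if_neg (by omega)]
    norm_num

lemma Slin_Tlin (i : ℕ) (hi : 1 ≤ i) (v : Vec) : Slin i (Tlin i v) = v := by
  calc Slin i (Tlin i v) = v.sum fun k c => c • Slin i (Tfun i k) := by
        rw [Tlin, Finsupp.linearCombination_apply, map_finsuppSum]
        exact Finsupp.sum_congr fun k _ => (map_smul _ _ _)
    _ = v.sum fun k c => Finsupp.single k c := by
        refine Finsupp.sum_congr fun k _ => ?_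
        rw [Slin_Tfun i k hi, e, Finsupp.smul_single, smul_eq_mul, mul_one]
    _ = v := Finsupp.sum_single v

lemma Slin_ei (i : ℕ) (hi : 1 ≤ i) : Slin i (e i) = 0 := by
  rw [Slin_e, Sfun, if_neg (by omega), if_neg (by omega), if_pos (by omega)]

lemma isS_valid {D : ℕ} {B : Finset (ℕ × ℕ)} (hB : IsS D B) :
    ∀ p ∈ B, 1 ≤ p.1 ∧ p.1 ≤ p.2 := by
  induction hB with
  | empty D => simp
  | one =>
    intro p hp
    simp only [Finset.mem_singleton] at hp
    subst hp
    simp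
  | step D i B' h1 h2 hB' ih =>
    intro p hp
    rw [tmap, Finset.mem_union] at hp
    rcases hp with hp | hp
    · obtain ⟨q, hq, rfl⟩ := Finset.mem_image.mp hp
      have := ih q hq
      simp only [tint]
      split_ifs <;> (try simp) <;> omega
    · simp only [Finset.mem_singleton] at hp
      subst hp
      simp [h1]

lemma tint_injOn {B' : Finset (ℕ × ℕ)} (hv : ∀ p ∈ B', 1 ≤ p.1 ∧ p.1 ≤ p.2) (i : ℕ) :
    Set.InjOn (tint i) B' := by
  intro p hp q hq h
  have h1 := hv p (Finset.mem_coe.mp hp)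
  have h2 := hv q (Finset.mem_coe.mp hq)
  obtain ⟨a, b⟩ := p
  obtain ⟨c, d⟩ := q
  simp only [tint] at h h1 h2 ⊢
  split_ifs at h <;> simp_all [Prod.mk.injEq] <;> omega

lemma not_mem_image {B' : Finset (ℕ × ℕ)} (hv : ∀ p ∈ B', 1 ≤ p.1 ∧ p.1 ≤ p.2) (i : ℕ)
    (hi : 1 ≤ i) : (i, i) ∉ B'.image (tint i) := by
  intro hmem
  obtain ⟨p, hp, heq⟩ := Finset.mem_image.mp hmem
  have := hv p hp
  obtain ⟨a, b⟩ := p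
  simp only [tint] at heq this
  split_ifs at heq <;> simp_all [Prod.mk.injEq] <;> omega

lemma card_tmap (i : ℕ) (hi : 1 ≤ i) {B' : Finset (ℕ × ℕ)}
    (hv : ∀ p ∈ B', 1 ≤ p.1 ∧ p.1 ≤ p.2) : (tmap i B').card = B'.card + 1 := by
  rw [tmap, Finset.card_union_of_disjoint
      (Finset.disjoint_singleton_right.mpr (not_mem_image hv i hi)),
    Finset.card_image_of_injOn (tint_injOn hv i), Finset.card_singleton]

lemma EB_tmap_le (i : ℕ) (hi : 1 ≤ i) {B' : Finset (ℕ × ℕ)}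
    (hv : ∀ p ∈ B', 1 ≤ p.1 ∧ p.1 ≤ p.2) :
    EB (tmap i B') ≤ Submodule.map (Tlin i) (EB B') ⊔ Submodule.span (ZMod 2) {e i} := by
  rw [EB]
  apply Submodule.span_le.mpr
  rintro x ⟨q, hq, rfl⟩
  rcases Finset.mem_union.mp (Finset.mem_coe.mp hq) with hq' | hq'
  · obtain ⟨p, hp, rfl⟩ := Finset.mem_image.mp hq'
    apply Submodule.mem_sup_left
    rw [← T_eI i hi p (hv p hp).1 (hv p hp).2]
    exact Submodule.mem_map_of_mem (Submodule.subset_span ⟨p, by simpa using hp, rfl⟩)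
  · simp only [Finset.mem_singleton] at hq'
    subst hq'
    apply Submodule.mem_sup_right
    have : eI (i, i) = e i := by simp [eI]
    rw [this]
    exact Submodule.subset_span rfl

end Aux

/-- `D` odd, `B ∈ S_D`, `η_D ∈ 𝔼_B` implies `|B| = (D+1)/2`. -/
theorem stmt7 (D : ℕ) (hD : Odd D) (B : Finset (ℕ × ℕ)) (hB : IsS D B)
    (h : eta D ∈ EB B) : B.card = (D + 1) / 2 := by
  rw [Nat.odd_iff] at hD
  revert hD h
  induction hB with
  | empty D =>
    intro hD h
    exfalso
    simp only [EB, Finset.coe_empty, Set.image_empty, Submodule.span_empty,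
      Submodule.mem_bot] at h
    have h1 : eta D 1 = 0 := by rw [h]; rfl
    rw [eta_apply, if_pos (by omega)] at h1
    exact one_ne_zero h1
  | one => intro _ _; rfl
  | step D i B' h1 h2 hB' ih =>
    intro hD h
    have hD' : D % 2 = 1 := by omega
    have hv := isS_valid hB'
    have h' := EB_tmap_le i h1 hv h
    rw [Submodule.mem_sup] at h'
    obtain ⟨y, hy, z, hz, hyz⟩ := h'
    obtain ⟨x, hx, rfl⟩ := hy
    rw [Submodule.mem_span_singleton] at hz
    obtain ⟨c, rfl⟩ := hz
    have e1 : Slin i (Tlin i x + c • e i) = x := by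
      rw [map_add, map_smul, Slin_Tlin i h1, Slin_ei i h1, smul_zero, add_zero]
    have e2 : Slin i (eta (D + 2)) = eta D := by
      rw [T_eta D i hD' h1 h2, map_add, Slin_Tlin i h1, Slin_ei i h1, add_zero]
    have hxeta : x = eta D := by rw [← e1, hyz, e2]
    have hcard := ih hD' (hxeta ▸ hx)
    rw [card_tmap i h1 hv, hcard]
    omega
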